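/- For any node v of a trie with an ancestor chain, if w_v denotes the string read from v to the auxiliary root ⊥, k = min{ k' > 1 : w_v[k'] ≠ w_v[1] }, and ℓ ∈ {0,1} satisfies w_v[k] ≺_ℓ w_v[1], then the longest Lyndon word prefix of w_v with respect to ≺_ℓ has length 1, and the longest Lyndon word prefix of w_v with respect to ≺_{1-ℓ} has length at least k. -/

import Mathlib

/-- A trie with `n` edges: nodes are `0, …, n` with root `0`; every non-root node `v`
has a parent `parent v < v`, and the edge from `v` to its parent is labeled `label v`.
Edges from a node to its distinct children have distinct labels. -/
structure Trie (α : Type*) where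
  n : ℕ
  parent : Fin (n + 1) → Fin (n + 1)
  label : Fin (n + 1) → α
  root_fixed : parent 0 = 0
  parent_lt : ∀ v : Fin (n + 1), v ≠ 0 → parent v < v
  labels_distinct : ∀ u v : Fin (n + 1), u ≠ 0 → v ≠ 0 →
    parent u = parent v → label u = label v → u = v

/-- `strUp T k u` is the string of edge labels read along the path of length `k`
from `u` towards the root, i.e. `str(u, parentᵏ u)`. -/
def strUp {α : Type*} (T : Trie α) : ℕ → Fin (T.n + 1) → List α
  | 0, _ => []
  | k + 1, u => T.label u :: strUp T k (T.parent u)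


/-- A string is a Lyndon word w.r.t. an order `lt` on the alphabet:
it is (lexicographically) strictly smaller than every nonempty proper suffix. -/
def IsLyndonWrt {α : Type*} (lt : α → α → Prop) (w : List α) : Prop :=
  w ≠ [] ∧ ∀ i, 0 < i → i < w.length → List.Lex lt w (w.drop i)

/-- The two opposite alphabet orders `≺₀` (the given one) and `≺₁` (its reverse). -/
def ltOrd {α : Type*} [LinearOrder α] : Bool → α → α → Prop
  | false, a, b => a < b
  | true,  a, b => b < a

/- Auxiliary lemmas -/

lemma aux_not_lex_cons {α : Type*} (lt : α → α → Prop) {a b : α} {t t' : List α}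
    (h1 : ¬ lt a b) (h2 : a ≠ b) : ¬ List.Lex lt (a :: t) (b :: t') := by
  intro h
  cases h with
  | rel h => exact h1 h
  | cons h => exact h2 rfl

lemma aux_lex_rep {α : Type*} (lt : α → α → Prop) (a b : α) (h : lt a b) :
    ∀ m n : ℕ, m < n →
      List.Lex lt (List.replicate n a ++ [b]) (List.replicate m a ++ [b])
  | 0, n+1, _ => by
      simp only [List.replicate_succ, List.cons_append, List.replicate_zero,
        List.nil_append]
      exact List.Lex.rel h
  | m+1, n+1, hmn => by
      simp only [List.replicate_succ, List.cons_append]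
      exact List.Lex.cons (aux_lex_rep lt a b h m n (Nat.lt_of_succ_lt_succ hmn))

lemma aux_not_lex_rep {α : Type*} (lt : α → α → Prop) (hirr : ∀ x, ¬ lt x x) (a : α) :
    ∀ m n : ℕ, m ≤ n → ¬ List.Lex lt (List.replicate n a) (List.replicate m a)
  | 0, n, _ => by simp
  | m+1, n+1, hmn => by
      simp only [List.replicate_succ]
      intro h
      cases h with
      | rel h => exact hirr a h
      | cons h =>
          exact aux_not_lex_rep lt hirr a m n (Nat.le_of_succ_le_succ hmn) h

/-- For a node `v` of a trie at depth `d`, let `w_v = str(v, ⊥)` be the label string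
read from `v` up to the auxiliary parent `⊥` of the root, whose edge label `c` occurs
nowhere else in the trie. If `k = min {k' > 1 : w_v[k'] ≠ w_v[1]}` (1-indexed) and
`ℓ` is such that `w_v[k] ≺_ℓ w_v[1]`, then the longest Lyndon prefix of `w_v` w.r.t.
`≺_ℓ` has length 1, and the longest Lyndon prefix of `w_v` w.r.t. `≺_{1-ℓ}` has
length at least `k`. -/
theorem stmt15 {α : Type*} [LinearOrder α] (T : Trie α) (v : Fin (T.n + 1))
    (d : ℕ) (c : α) (k : ℕ) (ℓ : Bool)
    (hd : (T.parent)^[d] v = 0) (hpath : ∀ m, m < d → (T.parent)^[m] v ≠ 0)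
    (hc : ∀ u : Fin (T.n + 1), u ≠ 0 → T.label u ≠ c)
    (hk1 : 1 < k) (hk2 : k ≤ (strUp T d v ++ [c]).length)
    (hne : (strUp T d v ++ [c]).getD (k - 1) c ≠ (strUp T d v ++ [c]).getD 0 c)
    (hmin : ∀ k', 1 < k' → k' < k →
      (strUp T d v ++ [c]).getD (k' - 1) c = (strUp T d v ++ [c]).getD 0 c)
    (hℓ : ltOrd ℓ ((strUp T d v ++ [c]).getD (k - 1) c)
                  ((strUp T d v ++ [c]).getD 0 c)) :
    (∀ m, 1 < m → m ≤ (strUp T d v ++ [c]).length →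
      ¬ IsLyndonWrt (ltOrd ℓ) ((strUp T d v ++ [c]).take m)) ∧
    (∃ m, k ≤ m ∧ m ≤ (strUp T d v ++ [c]).length ∧
      IsLyndonWrt (ltOrd (!ℓ)) ((strUp T d v ++ [c]).take m)) := by
  set w := strUp T d v ++ [c] with hw
  set a := w.getD 0 c with hadef
  set b := w.getD (k-1) c with hbdef
  have h0 : (0:ℕ) < w.length := by omega
  have hklt : k - 1 < w.length := by omega
  have ha : w[0]'h0 = a := (List.getD_eq_getElem w c h0).symm
  have hb : w[k-1]'hklt = b := (List.getD_eq_getElem w c hklt).symm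
  have hirr : ∀ x : α, ¬ ltOrd ℓ x x := by
    intro x; cases ℓ <;> simp [ltOrd]
  have hnab : ¬ ltOrd ℓ a b := by
    cases ℓ <;> simp only [ltOrd] at hℓ ⊢ <;> exact not_lt.mpr (le_of_lt hℓ)
  have hab : a ≠ b := fun h => hne h.symm
  have hltab : ltOrd (!ℓ) a b := by
    cases ℓ <;> simpa [ltOrd] using hℓ
  -- all entries before position k-1 equal a
  have heqj : ∀ j (hj : j < k - 1), w[j]'(by omega) = a := by
    intro j hj
    rcases Nat.eq_zero_or_pos j with rfl | hj0
    · exact ha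
    · have h := hmin (j+1) (by omega) (by omega)
      rw [Nat.add_sub_cancel] at h
      rw [← List.getD_eq_getElem w c (show j < w.length by omega)]
      exact h
  -- prefixes of length ≤ k-1 are constant
  have htake : ∀ m, m ≤ k - 1 → w.take m = List.replicate m a := by
    intro m hm
    apply List.eq_replicate_iff.mpr
    constructor
    · rw [List.length_take]; omega
    · intro x hx
      obtain ⟨j, hj, rfl⟩ := List.mem_iff_getElem.mp hx
      rw [List.length_take] at hj
      rw [List.getElem_take]
      exact heqj j (by omega)
  have htakek : w.take k = List.replicate (k-1) a ++ [b] := by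
    have hkk : k = (k - 1) + 1 := by omega
    rw [hkk, List.take_succ, List.getElem?_eq_getElem hklt, hb,
      htake (k-1) le_rfl]
    rfl
  constructor
  · -- no Lyndon prefix of length > 1 w.r.t. ≺_ℓ
    intro m hm1 hm2
    rintro ⟨hne', hall⟩
    by_cases hmk : m ≤ k - 1
    · -- constant prefix, refute with suffix at i = 1
      have h := hall 1 one_pos (by rw [List.length_take]; omega)
      rw [htake m hmk, List.drop_replicate] at h
      exact aux_not_lex_rep (ltOrd ℓ) hirr a (m-1) m (by omega) h
    · -- prefix contains position k-1, refute with suffix at i = k-1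
      have hplen : (w.take m).length = m := by rw [List.length_take]; omega
      have hkm : k - 1 < (w.take m).length := by omega
      have h0m : (0:ℕ) < (w.take m).length := by omega
      have h := hall (k-1) (by omega) hkm
      rw [List.drop_eq_getElem_cons hkm, List.getElem_take, hb] at h
      have hpw : w.take m = a :: (w.take m).drop 1 := by
        conv_lhs => rw [← (List.drop_zero : (w.take m).drop 0 = _),
          List.drop_eq_getElem_cons h0m]
        rw [List.getElem_take, ha]
      rw [hpw] at h
      exact aux_not_lex_cons (ltOrd ℓ) hnab hab h
  · -- the prefix of length k is Lyndon w.r.t. ≺_{!ℓ}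
    refine ⟨k, le_rfl, hk2, ?_, ?_⟩
    · rw [htakek]; simp
    · intro i hi0 hi
      rw [htakek] at hi ⊢
      have hilen : i ≤ k - 1 := by
        simp only [List.length_append, List.length_replicate,
          List.length_cons, List.length_nil] at hi
        omega
      rw [List.drop_append_of_le_length (by simpa using hilen),
        List.drop_replicate]
      exact aux_lex_rep (ltOrd (!ℓ)) a b hltab (k-1-i) (k-1) (by omega)
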